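/- Let a > 1 and C_j(n,a) = C(n,j)·((1+a)/2)^{n-j}·((1-a)/2)^j. Then for every fixed x ∈ ℝ, the sequence F_n(x) = Σ_{j=0}^n C_j(n,a) e^{i(1-2j/n)x} converges to e^{iax} as n → ∞. -/

import Mathlib

open Filter Complex Asymptotics

lemma aux_tendsto_mul_exp_sub (c : ℂ) :
    Tendsto (fun n : ℕ => (n : ℂ) * (Complex.exp (c / n) - 1)) atTop (nhds c) := by
  have hinv : Tendsto (fun n : ℕ => ((n : ℂ))⁻¹) atTop (nhds 0) := by
    have : Tendsto (fun n : ℕ => ((((n : ℝ)⁻¹ : ℝ)) : ℂ)) atTop (nhds ((0 : ℝ) : ℂ)) := by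
      exact (Complex.continuous_ofReal.tendsto 0).comp (tendsto_inv_atTop_nhds_zero_nat (𝕜 := ℝ))
    simpa using this
  have hdiv : Tendsto (fun n : ℕ => c / n) atTop (nhds 0) := by
    simpa [div_eq_mul_inv] using hinv.const_mul c
  have hexp : HasDerivAt Complex.exp 1 0 := by
    simpa using Complex.hasDerivAt_exp 0
  have hlo : (fun z : ℂ => Complex.exp z - 1 - z) =o[nhds (0 : ℂ)] fun z => z := by
    have := hexp.isLittleO
    simpa using this
  have hlo2 : (fun n : ℕ => Complex.exp (c / n) - 1 - c / n) =o[atTop] fun n : ℕ => c / n :=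
    hlo.comp_tendsto hdiv
  have hlo3 : (fun n : ℕ => (n : ℂ) * (Complex.exp (c / n) - 1 - c / n)) =o[atTop]
      fun n : ℕ => (n : ℂ) * (c / n) :=
    (isBigO_refl (fun n : ℕ => (n : ℂ)) atTop).mul_isLittleO hlo2
  have hconst : (fun n : ℕ => (n : ℂ) * (c / n)) =O[atTop] fun _ : ℕ => (1 : ℝ) := by
    apply IsBigO.of_bound ‖c‖
    filter_upwards [eventually_ge_atTop 1] with n hn
    have hn' : (n : ℂ) ≠ 0 := Nat.cast_ne_zero.mpr (by omega)
    rw [mul_div_cancel₀ _ hn']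
    simp
  have h0 : Tendsto (fun n : ℕ => (n : ℂ) * (Complex.exp (c / n) - 1 - c / n)) atTop (nhds 0) :=
    (isLittleO_one_iff ℝ).mp (hlo3.trans_isBigO hconst)
  have := h0.add tendsto_const_nhds (b := c)
  rw [zero_add] at this
  refine this.congr' ?_
  filter_upwards [eventually_ge_atTop 1] with n hn
  have hn' : (n : ℂ) ≠ 0 := Nat.cast_ne_zero.mpr (by omega)
  field_simp
  ring

lemma aux_pow_tendsto_exp {u : ℕ → ℂ} {c : ℂ}
    (h : Tendsto (fun n : ℕ => (n : ℂ) * (u n - 1)) atTop (nhds c)) :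
    Tendsto (fun n : ℕ => u n ^ n) atTop (nhds (Complex.exp c)) := by
  have hu1 : Tendsto u atTop (nhds 1) := by
    have hinv : Tendsto (fun n : ℕ => ((n : ℂ))⁻¹) atTop (nhds 0) := by
      have : Tendsto (fun n : ℕ => ((((n : ℝ)⁻¹ : ℝ)) : ℂ)) atTop (nhds ((0 : ℝ) : ℂ)) := by
        exact (Complex.continuous_ofReal.tendsto 0).comp (tendsto_inv_atTop_nhds_zero_nat (𝕜 := ℝ))
      simpa using this
    have := (h.mul hinv).const_add 1
    rw [mul_zero, add_zero] at this
    refine this.congr' ?_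
    filter_upwards [eventually_ge_atTop 1] with n hn
    have hn' : (n : ℂ) ≠ 0 := Nat.cast_ne_zero.mpr (by omega)
    push_cast
    field_simp
    ring
  have hne : ∀ᶠ n in atTop, u n ≠ 0 := by
    have : ∀ᶠ n in atTop, u n ∈ Metric.ball (1 : ℂ) 1 :=
      hu1 (Metric.ball_mem_nhds 1 one_pos)
    filter_upwards [this] with n hn h0
    simp [Metric.mem_ball, h0] at hn
  have hlog : HasDerivAt Complex.log 1 1 := by
    simpa using Complex.hasDerivAt_log (Complex.one_mem_slitPlane)
  have hlo : (fun z : ℂ => Complex.log z - (z - 1)) =o[nhds (1 : ℂ)] fun z => z - 1 := by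
    have := hlog.isLittleO
    simpa [Complex.log_one] using this
  have hlo2 : (fun n : ℕ => Complex.log (u n) - (u n - 1)) =o[atTop] fun n => u n - 1 :=
    hlo.comp_tendsto hu1
  have hlo3 : (fun n : ℕ => (n : ℂ) * (Complex.log (u n) - (u n - 1))) =o[atTop]
      fun n : ℕ => (n : ℂ) * (u n - 1) :=
    (isBigO_refl (fun n : ℕ => (n : ℂ)) atTop).mul_isLittleO hlo2
  have h0 : Tendsto (fun n : ℕ => (n : ℂ) * (Complex.log (u n) - (u n - 1))) atTop (nhds 0) :=
    (isLittleO_one_iff ℝ).mp (hlo3.trans_isBigO (h.isBigO_one ℝ))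
  have hsum : Tendsto (fun n : ℕ => (n : ℂ) * Complex.log (u n)) atTop (nhds c) := by
    have := h.add h0
    rw [add_zero] at this
    refine this.congr fun n => by ring
  have := (Complex.continuous_exp.tendsto c).comp hsum
  refine this.congr' ?_
  filter_upwards [hne] with n hn
  simp only [Function.comp]
  rw [Complex.exp_nat_mul, Complex.exp_log hn]

theorem superoscillation_tendsto (a : ℝ) (ha : 1 < a) (x : ℝ) :
    Filter.Tendsto
      (fun n : ℕ =>
        ∑ j ∈ Finset.range (n + 1),
          ((n.choose j : ℂ) * (((1 : ℂ) + a) / 2) ^ (n - j) * (((1 : ℂ) - a) / 2) ^ j)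
            * Complex.exp (Complex.I * (1 - 2 * (j : ℂ) / (n : ℂ)) * (x : ℂ)))
      Filter.atTop (nhds (Complex.exp (Complex.I * (a : ℂ) * (x : ℂ)))) := by
  set p : ℂ := ((1 : ℂ) + a) / 2
  set q : ℂ := ((1 : ℂ) - a) / 2
  set u : ℕ → ℂ := fun n => p * Complex.exp (Complex.I * x / n) +
      q * Complex.exp (-(Complex.I * x) / n)
  have hlim : Tendsto (fun n : ℕ => (n : ℂ) * (u n - 1)) atTop
      (nhds (Complex.I * a * x)) := by
    have h1 := (aux_tendsto_mul_exp_sub (Complex.I * x)).const_mul p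
    have h2 := (aux_tendsto_mul_exp_sub (-(Complex.I * x))).const_mul q
    have := h1.add h2
    have heq : p * (Complex.I * x) + q * (-(Complex.I * x)) = Complex.I * a * x := by
      simp only [p, q]; ring
    rw [heq] at this
    refine this.congr fun n => ?_
    have hpq : p + q = 1 := by simp only [p, q]; ring
    simp only [u]
    calc p * ((n : ℂ) * (Complex.exp (Complex.I * x / n) - 1)) +
          q * ((n : ℂ) * (Complex.exp (-(Complex.I * x) / n) - 1))
        = (n : ℂ) * (p * Complex.exp (Complex.I * x / n) +
            q * Complex.exp (-(Complex.I * x) / n) - (p + q)) := by ring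
      _ = _ := by rw [hpq]
  have hmain := aux_pow_tendsto_exp hlim
  refine hmain.congr' ?_
  filter_upwards [eventually_ge_atTop 1] with n hn
  have hn' : (n : ℂ) ≠ 0 := Nat.cast_ne_zero.mpr (by omega)
  have hu : u n = q * Complex.exp (-(Complex.I * x) / n) + p * Complex.exp (Complex.I * x / n) := by
    simp only [u]; ring
  rw [hu, add_pow]
  refine Finset.sum_congr rfl fun j hj => ?_
  have hjn : j ≤ n := by simpa [Nat.lt_succ_iff] using Finset.mem_range.mp hj
  rw [mul_pow, mul_pow]
  have hexp : Complex.exp (Complex.I * (1 - 2 * (j : ℂ) / (n : ℂ)) * (x : ℂ)) =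
      Complex.exp (-(Complex.I * x) / n) ^ j * Complex.exp (Complex.I * x / n) ^ (n - j) := by
    rw [← Complex.exp_nat_mul, ← Complex.exp_nat_mul, ← Complex.exp_add]
    congr 1
    push_cast [Nat.cast_sub hjn]
    field_simp
    ring
  rw [hexp]
  ring
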